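/- Let 1 ≤ k ≤ m, let G : ℝ^n → ℝ^m be differentiable at x̄ ∈ ℝ^n with Jacobian JG(x̄) ∈ ℝ^{m×n}, set ȳ := G(x̄), and let β := { i : ȳ_i = ȳ_(k) } be the set of indices at which ȳ attains its k-th largest value. Then the constraint non-degeneracy condition JG(x̄)·ℝ^n + T^lin(ȳ) = ℝ^m holds if and only if the |β| × (n+1) matrix [ JG(x̄)_{β,:} 1_β ] (the rows of JG(x̄) indexed by β, augmented by a column of ones) has full row rank |β|. -/

import Mathlib

open Filter Topology Matrix

noncomputable def topkSum {ι : Type*} [Fintype ι] (k : ℕ) (x : ι → ℝ) : ℝ :=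
  sSup {v : ℝ | ∃ s : Finset ι, s.card = k ∧ v = ∑ i ∈ s, x i}

def Bk (m k : ℕ) : Set (Fin m → ℝ) := {x | topkSum k x ≤ 0}

noncomputable def sortDesc {m : ℕ} (x : Fin m → ℝ) : Fin m → ℝ :=
  fun i => (x ∘ Tuple.sort x) i.rev

noncomputable def ent {m : ℕ} (x : Fin m → ℝ) (i : ℕ) : ℝ :=
  if h : 1 ≤ i ∧ i ≤ m then x ⟨i - 1, by omega⟩ else 0

noncomputable def entE {m : ℕ} (x : Fin m → ℝ) (i : ℕ) : EReal :=
  if h : 1 ≤ i ∧ i ≤ m then ((x ⟨i - 1, by omega⟩ : ℝ) : EReal)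
  else if i = 0 then ⊤ else ⊥

def IsIndexPairOf {m : ℕ} (k : ℕ) (x : Fin m → ℝ) (k0 k1 : ℕ) : Prop :=
  k0 + 1 ≤ k ∧ k ≤ k1 ∧ k1 ≤ m ∧
  entE x (k0 + 1) < entE x k0 ∧
  (∀ i : ℕ, k0 + 1 ≤ i → i ≤ k1 → entE x i = entE x k) ∧
  entE x (k1 + 1) < entE x k1

def IsEProjOn {m : ℕ} (S : Set (Fin m → ℝ)) (y p : Fin m → ℝ) : Prop :=
  p ∈ S ∧ ∀ z ∈ S, ∑ i, (y i - p i) ^ 2 ≤ ∑ i, (y i - z i) ^ 2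

def ProjKKT {m : ℕ} (k : ℕ) (y ybar μ : Fin m → ℝ) (lam θ : ℝ) (k0 k1 : ℕ) : Prop :=
  IsIndexPairOf k ybar k0 k1 ∧
  (∀ i : Fin m, (i : ℕ) < k0 → ybar i = y i - lam ∧ μ i = 1) ∧
  (∀ i : Fin m, k0 ≤ (i : ℕ) → (i : ℕ) < k1 →
      ybar i = y i - lam * μ i ∧ ybar i = θ ∧ 0 ≤ μ i ∧ μ i ≤ 1) ∧
  (∑ i : Fin m, (if k0 ≤ (i : ℕ) ∧ (i : ℕ) < k1 then μ i else 0)) = (k : ℝ) - (k0 : ℝ) ∧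
  (∀ i : Fin m, k1 ≤ (i : ℕ) → ybar i = y i ∧ μ i = 0) ∧
  (∑ i : Fin m, (if (i : ℕ) < k0 then y i else 0)) - (k0 : ℝ) * lam + ((k : ℝ) - (k0 : ℝ)) * θ = 0 ∧
  0 < lam ∧
  (θ : EReal) < entE ybar k0 ∧ entE ybar (k1 + 1) < (θ : EReal)

noncomputable def cvar {m : ℕ} (τ : ℝ) (g : Fin m → ℝ) : ℝ :=
  ⨅ t : ℝ, t + (1 / ((1 - τ) * m)) * ∑ j, max (g j - t) 0


theorem my_surj_iff_li {a b : Type*} [Fintype a] [Fintype b] (M : Matrix a b ℝ) :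
    Function.Surjective M.mulVec ↔ LinearIndependent ℝ (fun i => M i) := by
  classical
  show Function.Surjective M.mulVec ↔ LinearIndependent ℝ M.row
  rw [← Matrix.vecMul_injective_iff]
  have h1 : Function.Surjective M.mulVec ↔ M.rank = Fintype.card a := by
    rw [← Matrix.coe_mulVecLin]
    constructor
    · intro h
      rw [Matrix.rank, LinearMap.range_eq_top.mpr h, finrank_top,
        Module.finrank_fintype_fun_eq_card]
    · intro h
      rw [← LinearMap.range_eq_top]
      apply Submodule.eq_top_of_finrank_eq
      rw [← Matrix.rank, h, Module.finrank_fintype_fun_eq_card]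
  have h2 : Function.Injective M.vecMul ↔ Mᵀ.rank = Fintype.card a := by
    have he : M.vecMul = Mᵀ.mulVec := by
      ext v i; rw [← Matrix.vecMul_transpose, Matrix.transpose_transpose]
    rw [he, ← Matrix.coe_mulVecLin, ← LinearMap.ker_eq_bot]
    have hrn := LinearMap.finrank_range_add_finrank_ker (Mᵀ.mulVecLin)
    rw [Module.finrank_fintype_fun_eq_card] at hrn
    constructor
    · intro h
      rw [h, finrank_bot, add_zero] at hrn
      rw [Matrix.rank, hrn]
    · intro h
      rw [Matrix.rank] at h
      rw [h] at hrn
      have : Module.finrank ℝ (LinearMap.ker Mᵀ.mulVecLin) = 0 := by omega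
      exact Submodule.finrank_eq_zero.mp this
  rw [h1, h2, Matrix.rank_transpose]


theorem key_mulVec_aug {m n : ℕ} (JG : Matrix (Fin m) (Fin n) ℝ) {P : Fin m → Prop}
    (M : Matrix {i : Fin m // P i} (Fin (n + 1)) ℝ)
    (hM : M = fun (i : {i : Fin m // P i}) (j : Fin (n + 1)) => if h : (j : ℕ) < n then JG i.1 ⟨(j : ℕ), h⟩ else 1)
    (v' : Fin (n + 1) → ℝ) (i : {i : Fin m // P i}) :
    M.mulVec v' i = JG.mulVec (fun j => v' j.castSucc) i.1 + v' (Fin.last n) := by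
  simp only [Matrix.mulVec, dotProduct, hM]
  rw [Fin.sum_univ_castSucc]
  congr 1
  · refine Finset.sum_congr rfl fun j _ => ?_
    rw [dif_pos (show ((j.castSucc : Fin (n+1)) : ℕ) < n from j.isLt)]
    congr 1
  · rw [dif_neg (by simp), one_mul]

/-- Let `G` be differentiable at `x̄` with Jacobian `JG`, `ȳ = G(x̄)`, and
`β = {i : ȳ_i = ȳ_(k)}`.  The constraint non-degeneracy condition
`JG(x̄)·ℝⁿ + T^lin(ȳ) = ℝ^m` holds iff `[JG_{β,:} 1_β]` has full row rank `|β|`. -/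
theorem constraint_nondegeneracy_iff
    (m n k : ℕ) (hk1 : 1 ≤ k) (hkm : k ≤ m)
    (G : (Fin n → ℝ) → (Fin m → ℝ)) (xbar : Fin n → ℝ)
    (JG : Matrix (Fin m) (Fin n) ℝ)
    (hG : HasFDerivAt G (LinearMap.toContinuousLinearMap (Matrix.mulVecLin JG)) xbar)
    (ybar : Fin m → ℝ) (hy : ybar = G xbar) :
    ({w : Fin m → ℝ | ∃ (v : Fin n → ℝ) (u : Fin m → ℝ),
        (∃ s : ℝ, ∀ i : Fin m, ybar i = ent (sortDesc ybar) k → u i = s) ∧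
        w = JG.mulVec v + u} = Set.univ) ↔
      LinearIndependent ℝ
        (fun i : {i : Fin m // ybar i = ent (sortDesc ybar) k} =>
          fun j : Fin (n + 1) =>
            if h : (j : ℕ) < n then JG i.1 ⟨(j : ℕ), h⟩ else 1) := by
  classical
  set M : Matrix {i : Fin m // ybar i = ent (sortDesc ybar) k} (Fin (n + 1)) ℝ :=
    fun i j => if h : (j : ℕ) < n then JG i.1 ⟨(j : ℕ), h⟩ else 1 with hM
  rw [← my_surj_iff_li M]
  have key := key_mulVec_aug JG M hM
  constructor
  · intro h t
    have hw : (fun i => if h' : ybar i = ent (sortDesc ybar) k then t ⟨i, h'⟩ else 0) ∈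
        {w : Fin m → ℝ | ∃ (v : Fin n → ℝ) (u : Fin m → ℝ),
          (∃ s : ℝ, ∀ i : Fin m, ybar i = ent (sortDesc ybar) k → u i = s) ∧
          w = JG.mulVec v + u} := by rw [h]; trivial
    obtain ⟨v, u, ⟨s, hsu⟩, hw⟩ := hw
    refine ⟨fun j => if h' : (j : ℕ) < n then v ⟨(j : ℕ), h'⟩ else s, funext fun i => ?_⟩
    rw [key]
    have hv : (fun j : Fin n =>
        (if h' : ((j.castSucc : Fin (n+1)) : ℕ) < n then v ⟨((j.castSucc : Fin (n+1)) : ℕ), h'⟩ else s))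
        = v := funext fun j => by
      rw [dif_pos (show ((j.castSucc : Fin (n+1)) : ℕ) < n from j.isLt)]
      exact congrArg v (Fin.ext (by simp))
    rw [hv, dif_neg (by simp)]
    have h1 := congrFun hw i.1
    simp only [Pi.add_apply, dif_pos i.2] at h1
    rw [hsu i.1 i.2] at h1
    rw [← h1]
  · intro hs
    ext w
    simp only [Set.mem_setOf_eq, Set.mem_univ, iff_true]
    obtain ⟨v', hv'⟩ := hs (fun i => w i.1)
    refine ⟨fun j => v' j.castSucc, fun i => w i - JG.mulVec (fun j => v' j.castSucc) i,
      ⟨v' (Fin.last n), fun i hi => ?_⟩, funext fun i => by simp [Pi.add_apply]⟩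
    have h1 := congrFun hv' ⟨i, hi⟩
    rw [key] at h1
    have h1' : (JG.mulVec fun j => v' j.castSucc) i + v' (Fin.last n) = w i := h1
    show w i - (JG.mulVec fun j => v' j.castSucc) i = v' (Fin.last n)
    linarith [h1']
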